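/- arXiv:0805.0825 — 3 statements merged into one kernel-verified Lean document; each statement's English description precedes it below -/
import Mathlib

section
/- Let (P_n, Q_n) be the Rudin–Shapiro polynomials (P_0 = Q_0 = 1, P_{n+1} = P_n + z^{2^n} Q_n, Q_{n+1} = P_n - z^{2^n} Q_n). Then the supremum of |P_n(z)| over the unit circle is at most 2^{(n+1)/2}. -/
/-- Rudin–Shapiro polynomials: `sup_{|z|=1} |P n z| ≤ 2^((n+1)/2)`. -/
theorem rudin_shapiro_sup_bound
    (P Q : ℕ → Polynomial ℂ)
    (hP0 : P 0 = 1) (hQ0 : Q 0 = 1)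
    (hP : ∀ n, P (n + 1) = P n + Polynomial.X ^ (2 ^ n) * Q n)
    (hQ : ∀ n, Q (n + 1) = P n - Polynomial.X ^ (2 ^ n) * Q n) :
    ∀ (n : ℕ) (z : ℂ), ‖z‖ = 1 →
      ‖(P n).eval z‖ ≤ (2 : ℝ) ^ (((n : ℝ) + 1) / 2) := by
  have key : ∀ (n : ℕ) (z : ℂ), ‖z‖ = 1 →
      ‖(P n).eval z‖ ^ 2 + ‖(Q n).eval z‖ ^ 2
        = 2 ^ (n + 1) := by
    intro n
    induction n with
    | zero =>
      intro z hz
      simp [hP0, hQ0]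
      norm_num
    | succ n ih =>
      intro z hz
      have habs : ‖z ^ 2 ^ n‖ = 1 := by
        rw [norm_pow, hz, one_pow]
      have := ih z hz
      rw [hP n, hQ n]
      simp only [Polynomial.eval_add, Polynomial.eval_sub, Polynomial.eval_mul,
        Polynomial.eval_pow, Polynomial.eval_X]
      set a := (P n).eval z
      set b := z ^ 2 ^ n * (Q n).eval z
      have hb : ‖b‖ = ‖(Q n).eval z‖ := by
        simp [b, norm_mul, norm_pow, hz]
      have par : ‖a + b‖ ^ 2 + ‖a - b‖ ^ 2
          = 2 * (‖a‖ ^ 2 + ‖b‖ ^ 2) := by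
        have := parallelogram_law_with_norm ℝ a b
        simpa [sq] using this
      rw [par, hb, this]
      ring
  intro n z hz
  have h := key n z hz
  have h1 : ‖(P n).eval z‖ ^ 2 ≤ 2 ^ (n + 1) := by
    nlinarith [sq_nonneg (‖(Q n).eval z‖)]
  have h2 : ((2 : ℝ) ^ (((n : ℝ) + 1) / 2)) ^ 2 = 2 ^ (n + 1) := by
    rw [← Real.rpow_natCast ((2:ℝ) ^ (((n : ℝ) + 1) / 2)) 2,
      ← Real.rpow_mul (by norm_num)]
    norm_num
    rw [← Real.rpow_natCast 2 (n+1)]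
    norm_num
  have hpos : (0:ℝ) ≤ (2 : ℝ) ^ (((n : ℝ) + 1) / 2) := Real.rpow_nonneg (by norm_num) _
  nlinarith [norm_nonneg ((P n).eval z)]
end

section
/- Let f(s) = Σ_{n=1}^∞ a_n n^{-s} be a Dirichlet series that is analytic and bounded on the half-plane Re s > 0 with sup norm ‖f‖_∞, and suppose the partial sums satisfy ‖S_N(f)‖_∞ ≤ C (log N) ‖f‖_∞ for all N ≥ 2 (uniformly on Re s > 0). Then for every ε > 0, the series Σ a_n n^{-s-ε} converges uniformly on the half-plane Re s > 0. -/
open Finset Filter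


lemma bohr_abel (a : ℕ → ℂ) (ε : ℝ) (N : ℕ) (s : ℂ) :
    ∑ n ∈ Finset.Icc 1 N, a n * (n : ℂ) ^ (-s - (ε : ℂ)) =
      (∑ n ∈ Finset.range N, (∑ k ∈ Finset.Icc 1 n, a k * (k : ℂ) ^ (-s)) *
        ((n : ℂ) ^ (-(ε:ℂ)) - ((n : ℂ) + 1) ^ (-(ε:ℂ)))) +
      (∑ k ∈ Finset.Icc 1 N, a k * (k : ℂ) ^ (-s)) * (N : ℂ) ^ (-(ε:ℂ)) := by
  induction N with
  | zero => simp
  | succ N ih =>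
    rw [Finset.sum_Icc_succ_top (by omega), Finset.sum_range_succ,
      Finset.sum_Icc_succ_top (Nat.one_le_iff_ne_zero.mpr (Nat.succ_ne_zero N)), ih]
    have hne : ((N + 1 : ℕ) : ℂ) ≠ 0 := Nat.cast_ne_zero.mpr (Nat.succ_ne_zero N)
    have hsplit : ((N + 1 : ℕ) : ℂ) ^ (-s - (ε:ℂ)) =
        ((N + 1 : ℕ) : ℂ) ^ (-s) * ((N + 1 : ℕ) : ℂ) ^ (-(ε:ℂ)) := by
      rw [sub_eq_add_neg, Complex.cpow_add _ _ hne]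
    rw [hsplit]
    push_cast
    ring

lemma bohr_rpow_diff_le (ε : ℝ) (hε : 0 < ε) (n : ℕ) (hn : 1 ≤ n) :
    (n:ℝ) ^ (-ε) - ((n:ℝ) + 1) ^ (-ε) ≤ ε / n * (n:ℝ) ^ (-ε) := by
  have hn0 : (0:ℝ) < n := by exact_mod_cast hn
  set L := Real.log (((n:ℝ) + 1) / n) with hLdef
  have hL : L ≤ 1 / n := by
    have h := Real.log_le_sub_one_of_pos (show (0:ℝ) < ((n:ℝ) + 1) / n by positivity)
    have : ((n:ℝ) + 1) / n - 1 = 1 / n := by field_simp; ring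
    linarith [h, this.le]
  have hL0 : 0 ≤ L := Real.log_nonneg (by rw [le_div_iff₀ hn0]; linarith)
  have h5 : (0:ℝ) < (n:ℝ) ^ (-ε) := Real.rpow_pos_of_pos hn0 _
  have key : (n:ℝ) ^ (-ε) * (1 - ε * L) ≤ ((n:ℝ) + 1) ^ (-ε) := by
    have h1 : ((n:ℝ) + 1) ^ (-ε) = (n:ℝ) ^ (-ε) * (((n:ℝ) + 1) / n) ^ (-ε) := by
      rw [← Real.mul_rpow (le_of_lt hn0) (by positivity)]
      congr 1
      field_simp
    have h2 : (((n:ℝ) + 1) / n) ^ (-ε) = Real.exp (-ε * L) := by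
      rw [Real.rpow_def_of_pos (by positivity), mul_comm]
    have h3 := Real.add_one_le_exp (-ε * L)
    rw [h1, h2]
    nlinarith
  have h6 : ε * L ≤ ε / n := by
    rw [div_eq_mul_one_div]
    exact mul_le_mul_of_nonneg_left hL hε.le
  nlinarith

/-- If the partial sums of a bounded Dirichlet series satisfy
`‖S_N(f)‖_∞ ≤ C log N ‖f‖_∞` on `Re s > 0`, then for every `ε > 0` the series
`∑ a_n n^{-s-ε}` converges uniformly on `Re s > 0`. -/
theorem bohr_uniform_convergence
    (a : ℕ → ℂ) (C M : ℝ) (hC : 0 < C) (hM : 0 ≤ M)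
    (hSN : ∀ N : ℕ, 2 ≤ N → ∀ s : ℂ, 0 < s.re →
      ‖∑ n ∈ Finset.Icc 1 N, a n * (n : ℂ) ^ (-s)‖ ≤ C * Real.log N * M) :
    ∀ ε : ℝ, 0 < ε →
      ∃ g : ℂ → ℂ,
        TendstoUniformlyOn
          (fun (N : ℕ) (s : ℂ) => ∑ n ∈ Finset.Icc 1 N, a n * (n : ℂ) ^ (-s - (ε : ℂ)))
          g atTop {s : ℂ | 0 < s.re} := by
  intro ε hε
  set E : Set ℂ := {s : ℂ | 0 < s.re} with hE
  set S : ℕ → ℂ → ℂ := fun n s => ∑ k ∈ Finset.Icc 1 n, a k * (k : ℂ) ^ (-s) with hS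
  set f : ℕ → ℂ → ℂ :=
    fun n s => S n s * ((n : ℂ) ^ (-(ε:ℂ)) - ((n : ℂ) + 1) ^ (-(ε:ℂ))) with hf
  set u : ℕ → ℝ :=
    fun n => (if n = 1 then ‖a 1‖ else 0) + 2*C*M * (n:ℝ) ^ (-(1+ε/2)) with hu
  have hu_sum : Summable u := by
    apply Summable.add
    · exact (hasSum_ite_eq 1 (‖a 1‖)).summable
    · exact (Real.summable_nat_rpow.mpr (by linarith)).mul_left _
  have hbound : ∀ n : ℕ, ∀ s, s ∈ E → ‖f n s‖ ≤ u n := by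
    intro n s hs
    match n with
    | 0 =>
      simp only [hf, hS, hu]
      norm_num
      positivity
    | 1 =>
      have hS1 : S 1 s = a 1 := by simp [hS]
      have ht : (2:ℂ) ^ (-(ε:ℂ)) = (((2:ℝ) ^ (-ε) : ℝ) : ℂ) := by
        rw [Complex.ofReal_cpow (by norm_num), Complex.ofReal_neg]
        norm_num
      have ht1 : (0:ℝ) < (2:ℝ) ^ (-ε) := Real.rpow_pos_of_pos (by norm_num) _
      have ht2 : (2:ℝ) ^ (-ε) ≤ 1 :=
        Real.rpow_le_one_of_one_le_of_nonpos (by norm_num) (by linarith)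
      have habs : ‖(1:ℂ) ^ (-(ε:ℂ)) - ((1:ℂ) + 1) ^ (-(ε:ℂ))‖ ≤ 1 := by
        have : ((1:ℂ) + 1) = (2:ℂ) := by norm_num
        rw [this, Complex.one_cpow, ht, ← Complex.ofReal_one, ← Complex.ofReal_sub,
          Complex.norm_real, Real.norm_eq_abs]
        rw [abs_of_nonneg (by linarith)]
        linarith
      have : ‖f 1 s‖ ≤ ‖a 1‖ := by
        rw [hf]
        simp only [Nat.cast_one, norm_mul, hS1]
        calc ‖a 1‖ * ‖(1:ℂ) ^ (-(ε:ℂ)) - ((1:ℂ) + 1) ^ (-(ε:ℂ))‖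
            ≤ ‖a 1‖ * 1 := by
              exact mul_le_mul_of_nonneg_left habs (norm_nonneg _)
          _ = ‖a 1‖ := mul_one _
      refine this.trans ?_
      rw [hu]
      simp only [if_pos rfl]
      have : (0:ℝ) ≤ 2*C*M * (1:ℝ) ^ (-(1+ε/2)) := by positivity
      push_cast
      linarith
    | (m+2) =>
      set n := m + 2 with hn
      have hn2 : 2 ≤ n := by omega
      have hn0 : (0:ℝ) < n := by positivity
      have hlog0 : 0 ≤ Real.log n := Real.log_nonneg (by exact_mod_cast hn2.trans' (by norm_num))
      have hSb : ‖S n s‖ ≤ C * Real.log n * M := hSN n hn2 s hs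
      -- the difference factor is a nonneg real
      have hcast1 : ((n:ℂ)) ^ (-(ε:ℂ)) = (((n:ℝ) ^ (-ε) : ℝ) : ℂ) := by
        rw [Complex.ofReal_cpow (le_of_lt hn0), Complex.ofReal_neg]
        push_cast
        ring_nf
      have hcast2 : ((n:ℂ) + 1) ^ (-(ε:ℂ)) = ((((n:ℝ) + 1) ^ (-ε) : ℝ) : ℂ) := by
        rw [Complex.ofReal_cpow (by positivity), Complex.ofReal_neg]
        push_cast
        ring_nf
      have hmono : ((n:ℝ) + 1) ^ (-ε) ≤ (n:ℝ) ^ (-ε) :=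
        Real.rpow_le_rpow_of_nonpos hn0 (by linarith) (by linarith)
      have hDabs : ‖(n:ℂ) ^ (-(ε:ℂ)) - ((n:ℂ) + 1) ^ (-(ε:ℂ))‖
          = (n:ℝ) ^ (-ε) - ((n:ℝ) + 1) ^ (-ε) := by
        rw [hcast1, hcast2, ← Complex.ofReal_sub, Complex.norm_real, Real.norm_eq_abs,
          abs_of_nonneg (by linarith)]
      have hdiff := bohr_rpow_diff_le ε hε n (by omega)
      have hlogle : Real.log n ≤ (n:ℝ) ^ (ε/2) / (ε/2) :=
        Real.log_le_rpow_div (le_of_lt hn0) (by linarith)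
      have hrpos : (0:ℝ) < (n:ℝ) ^ (-ε) := Real.rpow_pos_of_pos hn0 _
      have hr2pos : (0:ℝ) < (n:ℝ) ^ (ε/2) := Real.rpow_pos_of_pos hn0 _
      have hfinal : ((n:ℝ) ^ (ε/2) / (ε/2)) * (ε / n * (n:ℝ) ^ (-ε))
          = 2 * (n:ℝ) ^ (-(1+ε/2)) := by
        rw [show -(1+ε/2) = ε/2 + -ε + -1 by ring, Real.rpow_add hn0, Real.rpow_add hn0,
          Real.rpow_neg_one]
        field_simp
      have step1 : ‖f n s‖ ≤ (C * Real.log n * M) * (ε / n * (n:ℝ) ^ (-ε)) := by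
        rw [hf]
        simp only [norm_mul]
        rw [hDabs]
        apply mul_le_mul hSb (by linarith) (by linarith) (by positivity)
      have step2 : (C * Real.log n * M) * (ε / n * (n:ℝ) ^ (-ε))
          ≤ (C * ((n:ℝ) ^ (ε/2) / (ε/2)) * M) * (ε / n * (n:ℝ) ^ (-ε)) := by
        apply mul_le_mul_of_nonneg_right _ (by positivity)
        apply mul_le_mul_of_nonneg_right _ hM
        exact mul_le_mul_of_nonneg_left hlogle hC.le
      have step3 : (C * ((n:ℝ) ^ (ε/2) / (ε/2)) * M) * (ε / n * (n:ℝ) ^ (-ε))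
          = 2*C*M * (n:ℝ) ^ (-(1+ε/2)) := by
        linear_combination C * M * hfinal
      have hun : u n = 2*C*M * (n:ℝ) ^ (-(1+ε/2)) := by
        rw [hu]
        simp only [if_neg (by omega : ¬ n = 1)]
        ring
      rw [hun]
      calc ‖f n s‖ ≤ (C * Real.log n * M) * (ε / n * (n:ℝ) ^ (-ε)) := step1
        _ ≤ (C * ((n:ℝ) ^ (ε/2) / (ε/2)) * M) * (ε / n * (n:ℝ) ^ (-ε)) := step2
        _ = 2*C*M * (n:ℝ) ^ (-(1+ε/2)) := step3
  have h1 : TendstoUniformlyOn (fun N s => ∑ n ∈ Finset.range N, f n s)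
      (fun s => ∑' n, f n s) atTop E := tendstoUniformlyOn_tsum_nat hu_sum hbound
  have h2 : TendstoUniformlyOn (fun N s => S N s * (N:ℂ) ^ (-(ε:ℂ))) 0 atTop E := by
    rw [Metric.tendstoUniformlyOn_iff]
    intro δ hδ
    have h0 : Tendsto (fun x : ℝ => Real.log x / x ^ ε) atTop (nhds 0) :=
      (isLittleO_log_rpow_atTop hε).tendsto_div_nhds_zero
    have hlim : Tendsto (fun N : ℕ => C * M * (Real.log N * (N:ℝ) ^ (-ε))) atTop (nhds 0) := by
      have h1' := (h0.comp tendsto_natCast_atTop_atTop).const_mul (C*M)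
      rw [mul_zero] at h1'
      apply h1'.congr'
      filter_upwards [eventually_ge_atTop 1] with N hN
      have hN0 : (0:ℝ) < N := by exact_mod_cast hN
      simp only [Function.comp]
      rw [Real.rpow_neg (le_of_lt hN0)]
      field_simp
    filter_upwards [hlim.eventually (gt_mem_nhds hδ), eventually_ge_atTop 2] with N hN h2N
    intro x hx
    simp only [Pi.zero_apply, dist_zero_left]
    have hN0 : (0:ℝ) < N := by positivity
    have habs : ‖S N x * (N:ℂ) ^ (-(ε:ℂ))‖
        = ‖S N x‖ * (N:ℝ) ^ (-ε) := by
      rw [norm_mul]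
      congr 1
      rw [← Complex.ofReal_natCast, Complex.norm_cpow_eq_rpow_re_of_pos hN0]
      norm_num
    rw [habs]
    have hrp : (0:ℝ) < (N:ℝ) ^ (-ε) := Real.rpow_pos_of_pos hN0 _
    have := hSN N h2N x hx
    calc ‖S N x‖ * (N:ℝ) ^ (-ε)
        ≤ (C * Real.log N * M) * (N:ℝ) ^ (-ε) := mul_le_mul_of_nonneg_right this hrp.le
      _ = C * M * (Real.log N * (N:ℝ) ^ (-ε)) := by ring
      _ < δ := hN
  have h3 := h1.add h2
  refine ⟨_, h3.congr ?_⟩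
  filter_upwards with N
  intro s _
  simp only [Pi.add_apply]
  exact (bohr_abel a ε N s).symm
end

section
/- Let q ≥ 2 and d ≥ 1 be integers, and let A = (a_{ij}) be a q × q complex matrix with |a_{ij}| = 1 and A* A = qI. Define polynomials in qd variables by P_0^{(i)} = 1 for all i, and P_{k+1}^{(i)}(z) = Σ_{j=1}^q a_{ij} z_{kq+j} P_k^{(j)}(z). Then for every z with all |z_j| = 1 and every d, Σ_{i=1}^q |P_d^{(i)}(z)|^2 = q^{d+1}; in particular sup over the unit polytorus of |P_d^{(i)}| is at most q^{(d+1)/2} for each i. -/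
/-- The Bohnenblust–Hille construction: starting from `P₀⁽ⁱ⁾ = 1` and
`P_{k+1}⁽ⁱ⁾(z) = ∑_j a_{ij} z_{kq+j} P_k⁽ʲ⁾(z)` for a Walsh matrix `A` of size `q`,
one has `∑_i |P_d⁽ⁱ⁾(z)|² = q^{d+1}` on the unit polytorus, hence
`|P_d⁽ⁱ⁾(z)| ≤ q^{(d+1)/2}` there. -/
theorem bohnenblust_hille_construction
    (q d : ℕ) (hq : 2 ≤ q) (hd : 1 ≤ d)
    (A : Matrix (Fin q) (Fin q) ℂ)
    (hmod : ∀ i j, ‖A i j‖ = 1)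
    (hwalsh : Matrix.conjTranspose A * A = (q : ℂ) • (1 : Matrix (Fin q) (Fin q) ℂ))
    (P : ℕ → Fin q → (ℕ → ℂ) → ℂ)
    (hP0 : ∀ i z, P 0 i z = 1)
    (hPrec : ∀ k i z, P (k + 1) i z = ∑ j : Fin q, A i j * z (k * q + (j : ℕ)) * P k j z) :
    ∀ z : ℕ → ℂ, (∀ m, ‖z m‖ = 1) →
      (∑ i : Fin q, ‖P d i z‖ ^ 2 = (q : ℝ) ^ (d + 1)) ∧
      ∀ i : Fin q, ‖P d i z‖ ≤ (q : ℝ) ^ (((d : ℝ) + 1) / 2) := by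
  intro z hz
  have hz' : ∀ m, z m * (starRingEnd ℂ) (z m) = 1 := by
    intro m
    rw [Complex.mul_conj]
    rw [Complex.normSq_eq_norm_sq, hz m]
    norm_num
  have hAA : ∀ j j' : Fin q, (∑ i : Fin q, A i j * (starRingEnd ℂ) (A i j'))
      = if j' = j then (q : ℂ) else 0 := by
    intro j j'
    have h := congrFun (congrFun hwalsh j') j
    simp only [Matrix.mul_apply, Matrix.conjTranspose_apply, Matrix.smul_apply,
      Matrix.one_apply, smul_eq_mul, mul_ite, mul_one, mul_zero] at h
    rw [← h]
    apply Finset.sum_congr rfl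
    intro i _
    rw [mul_comm, RCLike.star_def]
  have key : ∀ k, ∑ i : Fin q, P k i z * (starRingEnd ℂ) (P k i z) = (q : ℂ) ^ (k + 1) := by
    intro k
    induction k with
    | zero => simp [hP0]
    | succ k ih =>
      have expand : ∀ i : Fin q, P (k+1) i z * (starRingEnd ℂ) (P (k+1) i z)
          = ∑ j : Fin q, ∑ j' : Fin q,
            (A i j * (starRingEnd ℂ) (A i j')) *
            ((z (k * q + (j:ℕ)) * (starRingEnd ℂ) (z (k * q + (j':ℕ)))) *
             (P k j z * (starRingEnd ℂ) (P k j' z))) := by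
        intro i
        rw [hPrec, map_sum, Finset.sum_mul_sum]
        apply Finset.sum_congr rfl; intro j _
        apply Finset.sum_congr rfl; intro j' _
        simp only [map_mul]
        ring
      calc ∑ i : Fin q, P (k+1) i z * (starRingEnd ℂ) (P (k+1) i z)
          = ∑ j : Fin q, ∑ j' : Fin q,
              (∑ i : Fin q, A i j * (starRingEnd ℂ) (A i j')) *
              ((z (k * q + (j:ℕ)) * (starRingEnd ℂ) (z (k * q + (j':ℕ)))) *
               (P k j z * (starRingEnd ℂ) (P k j' z))) := by
            simp only [expand]
            rw [Finset.sum_comm]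
            apply Finset.sum_congr rfl; intro j _
            rw [Finset.sum_comm]
            apply Finset.sum_congr rfl; intro j' _
            rw [Finset.sum_mul]
        _ = ∑ j : Fin q, (q : ℂ) * (P k j z * (starRingEnd ℂ) (P k j z)) := by
            apply Finset.sum_congr rfl; intro j _
            rw [Finset.sum_eq_single j]
            · rw [hAA, if_pos rfl, hz', one_mul]
            · intro j' _ hj'
              rw [hAA, if_neg hj', zero_mul]
            · intro h; exact absurd (Finset.mem_univ j) h
        _ = (q : ℂ) ^ (k + 1 + 1) := by
            rw [← Finset.mul_sum, ih]; ring
  have keyR : ∑ i : Fin q, ‖P d i z‖ ^ 2 = (q : ℝ) ^ (d + 1) := by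
    have h := key d
    simp only [Complex.mul_conj] at h
    have h2 : ((∑ i : Fin q, ‖P d i z‖ ^ 2 : ℝ) : ℂ)
        = (((q : ℝ) ^ (d + 1) : ℝ) : ℂ) := by
      push_cast
      rw [← h]
      apply Finset.sum_congr rfl
      intro i _
      norm_cast
      exact Complex.sq_norm _
    exact_mod_cast h2
  refine ⟨keyR, fun i => ?_⟩
  have hle : ‖P d i z‖ ^ 2 ≤ (q : ℝ) ^ (d + 1) := by
    rw [← keyR]
    exact Finset.single_le_sum (fun j _ => sq_nonneg (‖P d j z‖)) (Finset.mem_univ i)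
  have hqpos : (0 : ℝ) < (q : ℝ) := by positivity
  have hrw : ((q : ℝ) ^ (((d : ℝ) + 1) / 2)) ^ 2 = (q : ℝ) ^ (d + 1) := by
    rw [← Real.rpow_natCast ((q : ℝ) ^ (((d : ℝ) + 1) / 2)) 2, ← Real.rpow_mul hqpos.le,
      ← Real.rpow_natCast (q : ℝ) (d + 1)]
    congr 1
    push_cast
    ring
  have h2 : ‖P d i z‖ ^ 2 ≤ ((q : ℝ) ^ (((d : ℝ) + 1) / 2)) ^ 2 := by
    rw [hrw]; exact hle
  exact (pow_le_pow_iff_left₀ (norm_nonneg _) (Real.rpow_nonneg hqpos.le _)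
    two_ne_zero).mp h2
end
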